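/- arXiv:2505.09481 — 6 statements merged into one kernel-verified Lean document; each statement's English description precedes it below -/
import Mathlib

section
/- Let p and q be distinct odd primes, let a, b be positive integers with 4 ∣ gcd(φ(p^a), φ(q^b)), set N = p^a·q^b, and let ζ ∈ ℂ be a primitive N-th root of unity. Then the Galois group of ℚ(ζ + ζ^{−1}) over ℚ is not cyclic. -/
open Polynomial IntermediateField

set_option maxHeartbeats 1000000 in
set_option synthInstance.maxHeartbeats 400000 in
/-- If `p, q` are distinct odd primes, `a, b ≥ 1` with `4 ∣ gcd(φ(p^a), φ(q^b))`,
`N = p^a·q^b`, and `ζ` is a primitive `N`-th root of unity in `ℂ`, then the Galois group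
of `ℚ(ζ + ζ⁻¹)` over `ℚ` is not cyclic. -/
theorem stmt_7 (p q a b : ℕ) (hp : p.Prime) (hq : q.Prime) (hpodd : Odd p)
    (hqodd : Odd q) (hpq : p ≠ q) (ha : 0 < a) (hb : 0 < b)
    (h4 : 4 ∣ Nat.gcd (p ^ a).totient (q ^ b).totient)
    (ζ : ℂ) (hζ : IsPrimitiveRoot ζ (p ^ a * q ^ b)) :
    ¬ IsCyclic (ℚ⟮ζ + ζ⁻¹⟯ ≃ₐ[ℚ] ℚ⟮ζ + ζ⁻¹⟯) := by
  intro hcyc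
  have hppow : 0 < p ^ a := pow_pos hp.pos a
  have hqpow : 0 < q ^ b := pow_pos hq.pos b
  have hNpos : 0 < p ^ a * q ^ b := mul_pos hppow hqpow
  set Km : IntermediateField ℚ ℂ := ℚ⟮ζ + ζ⁻¹⟯ with hKm
  let n : ℕ+ := ⟨p ^ a * q ^ b, hNpos⟩
  have hζn : IsPrimitiveRoot ζ ((n : ℕ)) := hζ
  have hζ0 : ζ ≠ 0 := hζn.ne_zero hNpos.ne'
  have hint : IsIntegral ℚ ζ := (hζn.isIntegral hNpos).tower_top
  set L : IntermediateField ℚ ℂ := ℚ⟮ζ⟯ with hLdef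
  haveI hLcyc : IsCyclotomicExtension {(n : ℕ)} ℚ L := by
    have H := IntermediateField.adjoin_simple_toSubalgebra_of_isAlgebraic hint.isAlgebraic
    refine IsCyclotomicExtension.equiv _ _ _ (h := ?_) (.refl : L.toSubalgebra ≃ₐ[ℚ] _)
    rw [H]
    exact hζn.adjoin_isCyclotomicExtension ℚ
  haveI : FiniteDimensional ℚ L := IsCyclotomicExtension.finiteDimensional {(n : ℕ)} ℚ L
  haveI : IsGalois ℚ L := IsCyclotomicExtension.isGalois {(n : ℕ)} ℚ L
  have hirr : Irreducible (cyclotomic (n : ℕ) ℚ) := cyclotomic.irreducible_rat n.pos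
  let e : (L ≃ₐ[ℚ] L) ≃* (ZMod (n : ℕ))ˣ := IsCyclotomicExtension.autEquivPow L hirr
  have hcomm : ∀ σ τ : L ≃ₐ[ℚ] L, σ * τ = τ * σ := fun σ τ =>
    e.injective (by rw [e.map_mul, e.map_mul, mul_comm])
  -- the generator of L
  set ζL : L := AdjoinSimple.gen ℚ ζ with hζLdef
  have hζLcoe : (ζL : ℂ) = ζ := rfl
  have hζL0 : ζL ≠ 0 := by
    intro h
    apply hζ0
    rw [← hζLcoe, h, ZeroMemClass.coe_zero]
  -- K ≤ L
  have hηmemL : ζ + ζ⁻¹ ∈ L := add_mem (mem_adjoin_simple_self ℚ ζ)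
    (inv_mem (mem_adjoin_simple_self ℚ ζ))
  have hKL : Km ≤ L := adjoin_simple_le_iff.mpr hηmemL
  -- the copy of Km inside L
  set ηL : L := ⟨ζ + ζ⁻¹, hηmemL⟩ with hηLdef
  set E' : IntermediateField ℚ L := @IntermediateField.adjoin ℚ _ L _ L.algebra' {ηL} with hE'def
  haveI hE'n : (IntermediateField.fixingSubgroup E').Normal := by
    constructor
    intro x hx g
    have : g * x * g⁻¹ = x := by
      rw [hcomm g x, mul_assoc, mul_inv_cancel, mul_one]
    rwa [this]
  haveI hgalE' : IsGalois ℚ ↥E' := by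
    have h := IsGalois.of_fixedField_normal_subgroup (IntermediateField.fixingSubgroup E')
    rwa [IsGalois.fixedField_fixingSubgroup E'] at h
  have hlift : lift E' = Km := by
    rw [hE'def, lift_adjoin_simple]
  let eEK : ↥(lift E') ≃ₐ[ℚ] ↥Km := equivOfEq hlift
  haveI : Normal ℚ ↥(lift E') := Normal.of_algEquiv (h := hgalE'.to_normal) (liftAlgEquiv E')
  haveI : Normal ℚ Km := Normal.of_algEquiv eEK
  letI : Algebra Km L := (inclusion hKL).toRingHom.toAlgebra
  haveI : IsScalarTower ℚ Km L := IsScalarTower.of_algebraMap_eq (fun x => rfl)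
  let f : (L ≃ₐ[ℚ] L) →* (Km ≃ₐ[ℚ] Km) := AlgEquiv.restrictNormalHom Km
  have hsurj : Function.Surjective f := AlgEquiv.restrictNormalHom_surjective L
  -- kernel elements send ζL to ζL or ζL⁻¹
  set ηK : Km := ⟨ζ + ζ⁻¹, mem_adjoin_simple_self ℚ _⟩ with hηKdef
  have hcoeinv : ((ζL⁻¹ : L) : ℂ) = ζ⁻¹ := by
    rw [show ((ζL⁻¹ : L) : ℂ) = algebraMap L ℂ ζL⁻¹ from rfl, map_inv₀]
    rfl
  have hmapη : algebraMap Km L ηK = ζL + ζL⁻¹ := by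
    apply Subtype.ext
    show ζ + ζ⁻¹ = ((ζL + ζL⁻¹ : L) : ℂ)
    rw [AddMemClass.coe_add, hζLcoe, hcoeinv]
  have key : ∀ σ : L ≃ₐ[ℚ] L, σ ∈ f.ker → σ ζL = ζL ∨ σ ζL = ζL⁻¹ := by
    intro σ hσ
    have h := AlgEquiv.restrictNormal_commutes σ Km ηK
    rw [MonoidHom.mem_ker] at hσ
    have hσ' : σ.restrictNormal Km = 1 := hσ
    rw [hσ'] at h
    have h1 : σ (ζL + ζL⁻¹) = ζL + ζL⁻¹ := by
      rw [← hmapη]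
      rw [show (1 : Km ≃ₐ[ℚ] Km) ηK = ηK from rfl] at h
      exact h.symm
    have hmul : σ ζL * σ ζL⁻¹ = 1 := by
      rw [← map_mul, mul_inv_cancel₀ hζL0, map_one]
    have hsum : σ ζL + σ ζL⁻¹ = ζL + ζL⁻¹ := by rw [← map_add]; exact h1
    have hx0 : σ ζL ≠ 0 := by
      intro h0
      rw [h0, zero_mul] at hmul
      exact zero_ne_one hmul
    have hinvx : σ ζL⁻¹ = (σ ζL)⁻¹ := eq_inv_of_mul_eq_one_left (by rw [mul_comm]; exact hmul)
    have hprod : (σ ζL - ζL) * (σ ζL - ζL⁻¹) = 0 := by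
      have h2 : ζL * ζL⁻¹ = 1 := mul_inv_cancel₀ hζL0
      have h3 : σ ζL * (σ ζL)⁻¹ = 1 := mul_inv_cancel₀ hx0
      have hsum' : ζL + ζL⁻¹ = σ ζL + (σ ζL)⁻¹ := by rw [← hsum, hinvx]
      linear_combination (-(σ ζL)) * hsum' + h2 - h3
    rcases mul_eq_zero.mp hprod with h | h
    · left; exact sub_eq_zero.mp h
    · right; exact sub_eq_zero.mp h
  -- automorphisms of L are determined by the image of ζL
  have hinj : ∀ σ τ : L ≃ₐ[ℚ] L, σ ζL = τ ζL → σ = τ := by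
    intro σ τ h
    let pb : PowerBasis ℚ L := IntermediateField.adjoin.powerBasis hint
    have hAH : (σ : L →ₐ[ℚ] L) = (τ : L →ₐ[ℚ] L) := by
      apply pb.algHom_ext
      have hgen : pb.gen = ζL := IntermediateField.adjoin.powerBasis_gen hint
      rw [hgen]
      exact h
    exact AlgEquiv.coe_algHom_injective hAH
  -- kernel has at most 2 elements
  haveI : Finite ({ζL, ζL⁻¹} : Set L) :=
    ((Set.finite_singleton (ζL⁻¹)).insert ζL).to_subtype
  have hker2 : Nat.card f.ker ≤ 2 := by
    have hinj2 : Function.Injective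
        (fun σ : f.ker => (⟨σ.1 ζL, by
          rcases key σ.1 σ.2 with h | h <;> simp [h]⟩ : ({ζL, ζL⁻¹} : Set L))) := by
      intro σ τ h
      exact Subtype.ext (hinj _ _ (congrArg Subtype.val h))
    calc Nat.card f.ker ≤ Nat.card ({ζL, ζL⁻¹} : Set L) :=
          Nat.card_le_card_of_injective _ hinj2
      _ ≤ 2 := by
          rw [Nat.card_coe_set_eq]
          exact (Set.ncard_insert_le _ _).trans (by simp)
  -- cardinalities
  haveI : NeZero ((n : ℕ)) := ⟨hNpos.ne'⟩
  have hcardGL : Nat.card (L ≃ₐ[ℚ] L) = (p ^ a * q ^ b).totient := by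
    rw [Nat.card_congr e.toEquiv, Nat.card_eq_fintype_card, ZMod.card_units_eq_totient]
    rfl
  have hcardeq : Nat.card (Km ≃ₐ[ℚ] Km) * Nat.card f.ker = (p ^ a * q ^ b).totient := by
    rw [← hcardGL, Subgroup.card_eq_card_quotient_mul_card_subgroup f.ker]
    congr 1
    exact (Nat.card_congr (QuotientGroup.quotientKerEquivOfSurjective f hsurj).toEquiv).symm
  -- exponent bound
  have hcop : Nat.Coprime (p ^ a) (q ^ b) := ((Nat.coprime_primes hp hq).mpr hpq).pow a b
  haveI : NeZero (p ^ a) := ⟨hppow.ne'⟩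
  haveI : NeZero (q ^ b) := ⟨hqpow.ne'⟩
  let e2 : (L ≃ₐ[ℚ] L) ≃* (ZMod (p ^ a))ˣ × (ZMod (q ^ b))ˣ :=
    e.trans ((Units.mapEquiv (ZMod.chineseRemainder hcop).toMulEquiv).trans MulEquiv.prodUnits)
  have hexp : Monoid.exponent (Km ≃ₐ[ℚ] Km) ∣ Nat.lcm (p ^ a).totient (q ^ b).totient := by
    have h1 : Monoid.exponent (Km ≃ₐ[ℚ] Km) ∣ Monoid.exponent (L ≃ₐ[ℚ] L) :=
      MonoidHom.exponent_dvd hsurj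
    rw [Monoid.exponent_eq_of_mulEquiv e2] at h1
    refine h1.trans ?_
    rw [Monoid.exponent_prod]
    have d1 : Monoid.exponent (ZMod (p ^ a))ˣ ∣ (p ^ a).totient := by
      rw [← ZMod.card_units_eq_totient]
      exact Group.exponent_dvd_card
    have d2 : Monoid.exponent (ZMod (q ^ b))ˣ ∣ (q ^ b).totient := by
      rw [← ZMod.card_units_eq_totient]
      exact Group.exponent_dvd_card
    exact Nat.lcm_dvd (d1.trans (Nat.dvd_lcm_left _ _)) (d2.trans (Nat.dvd_lcm_right _ _))
  -- final arithmetic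
  have htot : (p ^ a * q ^ b).totient = (p ^ a).totient * (q ^ b).totient :=
    Nat.totient_mul hcop
  have hexp_eq : Monoid.exponent (Km ≃ₐ[ℚ] Km) = Nat.card (Km ≃ₐ[ℚ] Km) :=
    IsCyclic.exponent_eq_card
  have ht1 : 0 < (p ^ a).totient := Nat.totient_pos.mpr hppow
  have ht2 : 0 < (q ^ b).totient := Nat.totient_pos.mpr hqpow
  have hEk4 : Monoid.exponent (Km ≃ₐ[ℚ] Km) * 4 ∣ (p ^ a).totient * (q ^ b).totient := by
    calc Monoid.exponent (Km ≃ₐ[ℚ] Km) * 4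
        ∣ Nat.lcm (p ^ a).totient (q ^ b).totient * Nat.gcd (p ^ a).totient (q ^ b).totient :=
          mul_dvd_mul hexp h4
      _ = (p ^ a).totient * (q ^ b).totient := by
          rw [mul_comm]; exact Nat.gcd_mul_lcm _ _
  have hle : Monoid.exponent (Km ≃ₐ[ℚ] Km) * 4 ≤ (p ^ a).totient * (q ^ b).totient :=
    Nat.le_of_dvd (mul_pos ht1 ht2) hEk4
  have hge : (p ^ a).totient * (q ^ b).totient ≤ Monoid.exponent (Km ≃ₐ[ℚ] Km) * 2 := by
    rw [← htot, ← hcardeq, ← hexp_eq]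
    exact Nat.mul_le_mul_left _ hker2
  have hpos : 0 < Monoid.exponent (Km ≃ₐ[ℚ] Km) := by
    rw [hexp_eq]
    rcases Nat.eq_zero_or_pos (Nat.card (Km ≃ₐ[ℚ] Km)) with h0 | h0
    · rw [h0, zero_mul] at hcardeq
      have hpos' := mul_pos ht1 ht2
      rw [← htot] at hpos'
      omega
    · exact h0
  omega
end

section
/- Let N ≥ 3 be an integer and let ζ ∈ ℂ be a primitive N-th root of unity. Then the absolute value of the norm N_{ℚ(ζ)/ℚ}(ζ − ζ^{−1}) equals p if N = p^k or N = 2p^k for an odd prime p and k ≥ 1; it equals 4 if N = 2^k with k ≥ 2; and it equals 1 otherwise. -/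
open Polynomial IntermediateField

lemma aux_abs_eq_one {x : ℚ} {n : ℕ} (hn : n ≠ 0) (h : x ^ n = 1) : |x| = 1 := by
  have h1 : |x| ^ n = (1 : ℚ) ^ n := by rw [← abs_pow, h, abs_one, one_pow]
  exact (pow_left_strictMonoOn₀ hn).injOn (abs_nonneg x) (by norm_num) h1

lemma aux_not_prime_pow {n a b : ℕ} (ha : a.Prime) (hb : b.Prime) (hab : a ≠ b)
    (hA : a ∣ n) (hB : b ∣ n) {q : ℕ} (hq : q.Prime) (j : ℕ) : q ^ j ≠ n := by
  rintro rfl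
  have h1 : a = q := (Nat.prime_dvd_prime_iff_eq ha hq).1 (ha.dvd_of_dvd_pow hA)
  have h2 : b = q := (Nat.prime_dvd_prime_iff_eq hb hq).1 (hb.dvd_of_dvd_pow hB)
  exact hab (h1.trans h2.symm)

lemma aux_pp {q j n : ℕ} (hq : q.Prime) (h : q ^ j = n) (hn : 2 ≤ n) : q ∣ n ∧ 1 ≤ j := by
  rcases j with _ | j
  · simp at h; omega
  · exact ⟨h ▸ dvd_pow_self q (Nat.succ_ne_zero j), by omega⟩

lemma aux_odd_dvd {q m : ℕ} (hm : Odd m) (h : q ∣ m) : Odd q := by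
  by_contra h'
  rw [Nat.not_odd_iff_even] at h'
  exact (Nat.not_even_iff_odd.2 hm) (even_iff_two_dvd.2 ((even_iff_two_dvd.1 h').trans h))

lemma aux_cyclo_ext {K : Type*} [Field K] [Algebra ℚ K] {M : ℕ+} {ξ : K}
    (hξ : IsPrimitiveRoot ξ M) (htop : Algebra.adjoin ℚ ({ξ} : Set K) = ⊤) :
    IsCyclotomicExtension {(M : ℕ)} ℚ K := by
  refine (IsCyclotomicExtension.iff_adjoin_eq_top _ _ _).2 ⟨fun n hn _ => ?_, ?_⟩
  · rw [Set.mem_singleton_iff] at hn; exact ⟨ξ, hn ▸ hξ⟩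
  · rw [eq_top_iff, ← htop]
    apply Algebra.adjoin_mono
    intro x hx
    rw [Set.mem_singleton_iff] at hx
    subst hx
    exact ⟨M, Set.mem_singleton _, M.ne_zero, hξ.pow_eq_one⟩

/-- For `N ≥ 3` and `ζ` a primitive `N`-th root of unity in `ℂ`, the absolute value of the
norm `N_{ℚ(ζ)/ℚ}(ζ − ζ⁻¹)` equals `p` if `N = p^k` or `N = 2p^k` for an odd prime `p` and
`k ≥ 1`, equals `4` if `N = 2^k` with `k ≥ 2`, and equals `1` otherwise. -/
theorem stmt_11 (N : ℕ) (hN : 3 ≤ N) (ζ : ℂ) (hζ : IsPrimitiveRoot ζ N) :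
    (∀ p k : ℕ, p.Prime → Odd p → 1 ≤ k → (N = p ^ k ∨ N = 2 * p ^ k) →
      |Algebra.norm ℚ (IntermediateField.AdjoinSimple.gen ℚ ζ -
        (IntermediateField.AdjoinSimple.gen ℚ ζ)⁻¹)| = (p : ℚ)) ∧
    (∀ k : ℕ, 2 ≤ k → N = 2 ^ k →
      |Algebra.norm ℚ (IntermediateField.AdjoinSimple.gen ℚ ζ -
        (IntermediateField.AdjoinSimple.gen ℚ ζ)⁻¹)| = 4) ∧
    ((¬ ∃ p k : ℕ, p.Prime ∧ Odd p ∧ 1 ≤ k ∧ (N = p ^ k ∨ N = 2 * p ^ k)) →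
      (¬ ∃ k : ℕ, 2 ≤ k ∧ N = 2 ^ k) →
      |Algebra.norm ℚ (IntermediateField.AdjoinSimple.gen ℚ ζ -
        (IntermediateField.AdjoinSimple.gen ℚ ζ)⁻¹)| = 1) := by
  have hNpos : 0 < N := by omega
  set N' : ℕ+ := ⟨N, hNpos⟩ with hN'def
  have hN'coe : (N' : ℕ) = N := rfl
  set η := IntermediateField.AdjoinSimple.gen ℚ ζ with hηdef
  have hcoe : (η : ℂ) = ζ := rfl
  have hη : IsPrimitiveRoot η N := by
    rw [← IsPrimitiveRoot.coe_submonoidClass_iff, hcoe]; exact hζ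
  have hint : IsIntegral ℚ ζ := (hζ.isIntegral hNpos).tower_top
  haveI instN : IsCyclotomicExtension {(N' : ℕ)} ℚ ℚ⟮ζ⟯ := by
    have H := IntermediateField.adjoin_simple_toSubalgebra_of_isAlgebraic hint.isAlgebraic
    refine IsCyclotomicExtension.equiv _ _ _ (h := ?_)
      (AlgEquiv.refl : (ℚ⟮ζ⟯.toSubalgebra : Type _) ≃ₐ[ℚ] _)
    rw [H]
    exact IsPrimitiveRoot.adjoin_isCyclotomicExtension (n := (N' : ℕ)) ℚ hζ
  -- basic norm facts
  have hη0 : η ≠ 0 := hη.ne_zero (by omega)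
  have habsη : |Algebra.norm ℚ η| = 1 :=
    aux_abs_eq_one (n := N) (by omega) (by rw [← map_pow, hη.pow_eq_one, map_one])
  have habsinv : |Algebra.norm ℚ η⁻¹| = 1 := by
    have h1 : Algebra.norm ℚ η⁻¹ * Algebra.norm ℚ η = 1 := by
      rw [← map_mul, inv_mul_cancel₀ hη0, map_one]
    have h2 := congrArg abs h1
    rwa [abs_mul, habsη, mul_one, abs_one] at h2
  have hkey : |Algebra.norm ℚ (η - η⁻¹)| = |Algebra.norm ℚ (η ^ 2 - 1)| := by
    have h : η - η⁻¹ = η⁻¹ * (η ^ 2 - 1) := by field_simp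
    rw [h, map_mul, abs_mul, habsinv, one_mul]
  have habsneg : ∀ x : ℚ⟮ζ⟯, |Algebra.norm ℚ (-x)| = |Algebra.norm ℚ x| := by
    intro x
    have h1 : |Algebra.norm ℚ (-1 : ℚ⟮ζ⟯)| = 1 :=
      aux_abs_eq_one (n := 2) two_ne_zero (by rw [← map_pow]; norm_num)
    rw [show -x = -1 * x by ring, map_mul, abs_mul, h1, one_mul]
  -- the main computation of |norm (ξ - 1)|
  have Hval : ∀ (M : ℕ+) (ξ : ℚ⟮ζ⟯), IsCyclotomicExtension {(M : ℕ)} ℚ ℚ⟮ζ⟯ →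
      IsPrimitiveRoot ξ M → 2 < (M : ℕ) →
      |Algebra.norm ℚ (ξ - 1)| = |((eval 1 (cyclotomic (M : ℕ) ℤ) : ℤ) : ℚ)| := by
    intro M ξ hext hξ hM
    haveI := hext
    rw [hξ.sub_one_norm_eq_eval_cyclotomic hM (cyclotomic.irreducible_rat M.pos)]
  have Heval_pp : ∀ p k : ℕ, p.Prime → 1 ≤ k →
      |((eval 1 (cyclotomic (p ^ k) ℤ) : ℤ) : ℚ)| = p := by
    intro p k hp hk
    haveI : Fact p.Prime := ⟨hp⟩
    obtain ⟨k', rfl⟩ : ∃ k', k = k' + 1 := ⟨k - 1, by omega⟩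
    rw [eval_one_cyclotomic_prime_pow]
    push_cast
    exact abs_of_nonneg (by positivity)
  have Heval_npp : ∀ m : ℕ, (∀ {q : ℕ}, q.Prime → ∀ j, q ^ j ≠ m) →
      |((eval 1 (cyclotomic m ℤ) : ℤ) : ℚ)| = 1 := by
    intro m h
    rw [eval_one_cyclotomic_not_prime_pow h]
    norm_num
  -- case: N odd
  have Hodd : Odd N → |Algebra.norm ℚ (η ^ 2 - 1)| =
      |((eval 1 (cyclotomic N ℤ) : ℤ) : ℚ)| := by
    intro hoddN
    have hη2 : IsPrimitiveRoot (η ^ 2) N := hη.pow_of_coprime 2 (Nat.coprime_two_left.2 hoddN)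
    exact Hval N' (η ^ 2) instN hη2 (by exact (by omega : 2 < N))
  -- case: 4 ∣ N
  have H4 : N % 4 = 0 → |Algebra.norm ℚ (η ^ 2 - 1)| =
      |((eval 1 (cyclotomic N ℤ) : ℤ) : ℚ)| * |((eval 1 (cyclotomic N ℤ) : ℤ) : ℚ)| := by
    intro h4
    have hξ : IsPrimitiveRoot (-η) N := by
      rw [IsPrimitiveRoot.iff_def]
      refine ⟨?_, ?_⟩
      · rw [(Nat.even_iff.2 (by omega) : Even N).neg_pow, hη.pow_eq_one]
      · intro l hl
        rcases Nat.even_or_odd l with hle | hlo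
        · rw [hle.neg_pow] at hl
          exact hη.dvd_of_pow_eq_one l hl
        · exfalso
          have h2l : η ^ (2 * l) = 1 := by
            have : ((-η) ^ l) ^ 2 = 1 := by rw [hl]; norm_num
            rwa [← pow_mul, mul_comm l 2, pow_mul, neg_sq, ← pow_mul] at this
          have h4dvd : (4 : ℕ) ∣ 2 * l :=
            (Nat.dvd_of_mod_eq_zero h4).trans (hη.dvd_of_pow_eq_one _ h2l)
          obtain ⟨d, hd⟩ := hlo
          omega
    have e1 := Hval N' η instN hη (by exact (by omega : 2 < N))
    have e2 := Hval N' (-η) instN hξ (by exact (by omega : 2 < N))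
    have e3 : |Algebra.norm ℚ (η + 1)| = |Algebra.norm ℚ (-η - 1)| := by
      rw [show -η - 1 = -(η + 1) by ring, habsneg]
    rw [show η ^ 2 - 1 = (η - 1) * (η + 1) by ring, map_mul, abs_mul, e1, e3, e2]
    exact rfl
  -- case: N ≡ 2 mod 4
  have H2mod4 : N % 4 = 2 → |Algebra.norm ℚ (η ^ 2 - 1)| =
      |((eval 1 (cyclotomic N ℤ) : ℤ) : ℚ)| * |((eval 1 (cyclotomic (N / 2) ℤ) : ℤ) : ℚ)| := by
    intro h4
    set M : ℕ := N / 2 with hMdef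
    have hM3 : 3 ≤ M := by omega
    have hModd : Odd M := Nat.odd_iff.2 (by omega)
    have hηM : η ^ M = -1 :=
      (hη.pow hNpos (by omega : N = M * 2)).eq_neg_one_of_two_right
    have hξ : IsPrimitiveRoot (-η) M := by
      rw [IsPrimitiveRoot.iff_def]
      refine ⟨by rw [hModd.neg_pow, hηM, neg_neg], ?_⟩
      intro l hl
      have h2l : η ^ (2 * l) = 1 := by
        have : ((-η) ^ l) ^ 2 = 1 := by rw [hl]; norm_num
        rwa [← pow_mul, mul_comm l 2, pow_mul, neg_sq, ← pow_mul] at this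
      have hNdvd : N ∣ 2 * l := hη.dvd_of_pow_eq_one _ h2l
      have h2M : 2 * M ∣ 2 * l := by rw [show 2 * M = N by omega]; exact hNdvd
      exact (Nat.mul_dvd_mul_iff_left (by norm_num : (0:ℕ) < 2)).1 h2M
    have htopη : Algebra.adjoin ℚ ({η} : Set ℚ⟮ζ⟯) = ⊤ :=
      IsCyclotomicExtension.adjoin_primitive_root_eq_top (n := (N' : ℕ)) hη
    have htopneg : Algebra.adjoin ℚ ({-η} : Set ℚ⟮ζ⟯) = ⊤ := by
      rw [eq_top_iff, ← htopη]
      apply Algebra.adjoin_le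
      intro x hx
      rw [Set.mem_singleton_iff] at hx
      subst hx
      have hmem : -η ∈ Algebra.adjoin ℚ ({-η} : Set ℚ⟮ζ⟯) := Algebra.subset_adjoin rfl
      simpa using neg_mem hmem
    haveI instM : IsCyclotomicExtension {((⟨M, by omega⟩ : ℕ+) : ℕ)} ℚ ℚ⟮ζ⟯ :=
      aux_cyclo_ext hξ htopneg
    have e1 := Hval N' η instN hη (by exact (by omega : 2 < N))
    have e2 := Hval ⟨M, by omega⟩ (-η) instM hξ (by exact (by omega : 2 < M))
    have e3 : |Algebra.norm ℚ (η + 1)| = |Algebra.norm ℚ (-η - 1)| := by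
      rw [show -η - 1 = -(η + 1) by ring, habsneg]
    rw [show η ^ 2 - 1 = (η - 1) * (η + 1) by ring, map_mul, abs_mul, e1, e3, e2]
    exact rfl
  refine ⟨?_, ?_, ?_⟩
  · rintro p k hp hpodd hk (rfl | rfl)
    · rw [hkey, Hodd hpodd.pow, Heval_pp p k hp hk]
    · have hpk : p ^ k % 2 = 1 := Nat.odd_iff.1 hpodd.pow
      have h4 : (2 * p ^ k) % 4 = 2 := by omega
      have hp2 : p ≠ 2 := by
        intro h; rw [h] at hpodd; exact (Nat.not_odd_iff_even.2 (even_two)) hpodd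
      rw [hkey, H2mod4 h4, show 2 * p ^ k / 2 = p ^ k by omega, Heval_pp p k hp hk,
        Heval_npp _ (fun {q} hq j => aux_not_prime_pow Nat.prime_two hp (by omega)
          ⟨p ^ k, rfl⟩ (Dvd.dvd.mul_left (dvd_pow_self p (by omega)) 2) hq j), one_mul]
  · rintro k hk rfl
    have hdvd : (4 : ℕ) ∣ 2 ^ k := by
      have := pow_dvd_pow 2 hk
      norm_num at this
      exact this
    have h4 : 2 ^ k % 4 = 0 := by omega
    rw [hkey, H4 h4, Heval_pp 2 k Nat.prime_two (by omega)]
    norm_num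
  · intro h1 h2
    rcases Nat.even_or_odd N with heN | hoN
    · have hmod : N % 4 = 0 ∨ N % 4 = 2 := by
        have := Nat.even_iff.1 heN; omega
      rcases hmod with h40 | h42
      · -- 4 ∣ N, N not a power of 2
        rw [hkey, H4 h40, Heval_npp N ?_, one_mul]
        intro q hq j hqj
        obtain ⟨hqdvd, hj1⟩ := aux_pp hq hqj (by omega)
        have hq2 : q = 2 := by
          have h2q : (2 : ℕ) ∣ q ^ j := by omega
          exact ((Nat.prime_dvd_prime_iff_eq Nat.prime_two hq).1
            (Nat.prime_two.dvd_of_dvd_pow h2q)).symm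
        subst hq2
        have hj2 : 2 ≤ j := by
          rcases j with _ | _ | j
          · omega
          · rw [pow_one] at hqj; omega
          · omega
        exact h2 ⟨j, hj2, hqj.symm⟩
      · -- N = 2M, M odd ≥ 3
        have hM3 : 3 ≤ N / 2 := by omega
        have hModd : Odd (N / 2) := Nat.odd_iff.2 (by omega)
        have hMne1 : N / 2 ≠ 1 := by omega
        have hqM := Nat.minFac_prime hMne1
        have hqMdvd : (N / 2).minFac ∣ N / 2 := Nat.minFac_dvd _
        have hqModd : Odd (N / 2).minFac := aux_odd_dvd hModd hqMdvd
        have hqM2 : (N / 2).minFac ≠ 2 := by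
          intro h; rw [h] at hqModd; exact (Nat.not_odd_iff_even.2 even_two) hqModd
        rw [hkey, H2mod4 h42, Heval_npp N ?_, Heval_npp (N / 2) ?_, one_mul]
        · -- N / 2 is not a prime power
          intro q hq j hqj
          obtain ⟨hqdvd, hj1⟩ := aux_pp hq hqj (by omega)
          have hqodd : Odd q := aux_odd_dvd hModd hqdvd
          exact h1 ⟨q, j, hq, hqodd, hj1, Or.inr (by omega)⟩
        · -- N is not a prime power
          exact fun {q} hq j => aux_not_prime_pow Nat.prime_two hqM hqM2.symm
            ⟨N / 2, by omega⟩ (hqMdvd.trans ⟨2, by omega⟩) hq j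
    · -- N odd
      rw [hkey, Hodd hoN, Heval_npp N ?_]
      intro q hq j hqj
      obtain ⟨hqdvd, hj1⟩ := aux_pp hq hqj (by omega)
      have hqodd : Odd q := aux_odd_dvd hoN hqdvd
      exact h1 ⟨q, j, hq, hqodd, hj1, Or.inl hqj.symm⟩
end

section
/- For every integer n ≥ 1, the identity x · w_n(x²) = v_{2n−1}(x) holds in ℤ[x]. -/
open Polynomial

/-- The recurrence sequence `w₀ = 1`, `w₁ = 1`, `wₙ = (x−2)·wₙ₋₁ − wₙ₋₂`. -/
noncomputable def w : ℕ → Polynomial ℤ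
  | 0 => 1
  | 1 => 1
  | n + 2 => (X - C 2) * w (n + 1) - w n

/-- The Vieta–Lucas polynomials: `v₀ = 2`, `v₁ = x`, `vₙ = x·vₙ₋₁ − vₙ₋₂`. -/
noncomputable def v : ℕ → Polynomial ℤ
  | 0 => C 2
  | 1 => X
  | n + 2 => X * v (n + 1) - v n

lemma v_two_step (k : ℕ) : v (k + 4) = (X ^ 2 - C 2) * v (k + 2) - v k := by
  have h1 : v (k + 4) = X * v (k + 3) - v (k + 2) := rfl
  have h2 : v (k + 3) = X * v (k + 2) - v (k + 1) := rfl
  have h3 : v (k + 2) = X * v (k + 1) - v k := rfl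
  rw [h1, h2]
  simp only [show (C 2 : Polynomial ℤ) = 2 from by simp]
  linear_combination h3

lemma aux (n : ℕ) :
    X * (w (n + 1)).comp (X ^ 2) = v (2 * n + 1) ∧
    X * (w (n + 2)).comp (X ^ 2) = v (2 * n + 3) := by
  induction n with
  | zero =>
    constructor
    · show X * (w 1).comp (X ^ 2) = v 1
      simp [w, v]
    · show X * (w 2).comp (X ^ 2) = v 3
      show X * ((X - C 2) * w 1 - w 0).comp (X ^ 2) = X * v 2 - v 1
      show X * ((X - C 2) * w 1 - w 0).comp (X ^ 2) = X * (X * v 1 - v 0) - v 1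
      simp [w, v]
      ring
  | succ k ih =>
    obtain ⟨h1, h2⟩ := ih
    refine ⟨by rw [show 2 * (k + 1) + 1 = 2 * k + 3 from by ring]; exact h2, ?_⟩
    have hw : w (k + 3) = (X - C 2) * w (k + 2) - w (k + 1) := rfl
    have hv : v (2 * (k + 1) + 3) = (X ^ 2 - C 2) * v (2 * k + 3) - v (2 * k + 1) := by
      rw [show 2 * (k + 1) + 3 = (2 * k + 1) + 4 from by ring,
          show 2 * k + 3 = (2 * k + 1) + 2 from by ring]
      exact v_two_step _
    rw [hv, hw, ← h1, ← h2]
    simp [sub_comp, mul_comp]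
    ring

/-- For every `n ≥ 1`, the identity `x·wₙ(x²) = v_{2n−1}(x)` holds in `ℤ[x]`. -/
theorem stmt_12 (n : ℕ) (hn : 1 ≤ n) :
    X * (w n).comp (X ^ 2) = v (2 * n - 1) := by
  obtain ⟨m, rfl⟩ := Nat.exists_eq_add_of_le hn
  rw [show 2 * (1 + m) - 1 = 2 * m + 1 from by omega, show 1 + m = m + 1 from by ring]
  exact (aux m).1
end

section
/- Let n ≥ 2 and set ζ = e^{iπ/(2(2n−1))} ∈ ℂ. Then the set of complex roots of w_n(x) is exactly {ζ^{2(2j−1)} + ζ^{−2(2j−1)} + 2 : j = 1, 2, …, n−1}, and these n−1 complex numbers are pairwise distinct. -/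
open Polynomial

lemma w_key (t z : ℂ) (h : t * z = t^2 + 2*t + 1) :
    ∀ n : ℕ, (t+1) * t^n * (aeval z (w n)) = t^(2*n) + t := by
  intro n
  induction n using Nat.twoStepInduction with
  | zero => simp [w]; ring
  | one => simp [w]; ring
  | more n ih1 ih2 =>
    show (t+1) * t^(n+2) * (aeval z ((X - C 2) * w (n+1) - w n)) = t^(2*(n+2)) + t
    simp only [map_sub, map_mul, aeval_X, aeval_C, map_ofNat]
    linear_combination (t^2+1)*ih2 - t^2*ih1 + ((t+1)*t^(n+1)*(aeval z (w (n+1))))*h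

noncomputable def th (n j : ℕ) : ℝ := (2*j-1)*Real.pi/(2*n-1)

lemma cast2nR (n : ℕ) (hn : 2 ≤ n) : ((2*n-1:ℕ):ℝ) = 2*n-1 := by
  push_cast [Nat.cast_sub (show 1 ≤ 2*n by omega)]; ring

lemma cast2nC (n : ℕ) (hn : 2 ≤ n) : ((2*n-1:ℕ):ℂ) = 2*n-1 := by
  push_cast [Nat.cast_sub (show 1 ≤ 2*n by omega)]; ring

lemma ne2nR (n : ℕ) (hn : 2 ≤ n) : (2*(n:ℝ)-1) ≠ 0 := by
  have : (2:ℝ) ≤ n := by exact_mod_cast hn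
  nlinarith

lemma ne2nC (n : ℕ) (hn : 2 ≤ n) : (2*(n:ℂ)-1) ≠ 0 := by
  rw [← cast2nC n hn]
  exact Nat.cast_ne_zero.mpr (by omega)

lemma aux_zeta (n j : ℕ) (hn : 2 ≤ n) (hj : 1 ≤ j) (ζ : ℂ)
    (hζ : ζ = Complex.exp (Real.pi * Complex.I / (2 * ((2 * n - 1 : ℕ) : ℂ)))) :
    ζ^(2*(2*j-1)) = Complex.exp ((th n j : ℝ) * Complex.I) := by
  rw [hζ, ← Complex.exp_nat_mul]
  congr 1
  rw [cast2nC n hn, th]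
  push_cast [Nat.cast_sub (show 1 ≤ 2*j by omega), Nat.cast_sub (show 1 ≤ 2*n by omega)]
  have h1 := ne2nC n hn
  field_simp

lemma aux_sum (n j : ℕ) (hn : 2 ≤ n) (hj : 1 ≤ j) (ζ : ℂ)
    (hζ : ζ = Complex.exp (Real.pi * Complex.I / (2 * ((2 * n - 1 : ℕ) : ℂ)))) :
    ζ^(2*(2*j-1)) + (ζ^(2*(2*j-1)))⁻¹ + 2 = ((2*Real.cos (th n j) + 2 : ℝ) : ℂ) := by
  rw [aux_zeta n j hn hj ζ hζ]
  have h1 : Complex.exp (((th n j : ℝ):ℂ) * Complex.I)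
      = Complex.cos (th n j) + Complex.sin (th n j) * Complex.I := Complex.exp_mul_I _
  have h2 : (Complex.exp (((th n j : ℝ):ℂ) * Complex.I))⁻¹
      = Complex.cos (th n j) - Complex.sin (th n j) * Complex.I := by
    rw [← Complex.exp_neg,
      show -(((th n j : ℝ):ℂ) * Complex.I) = (-((th n j : ℝ):ℂ)) * Complex.I from by ring,
      Complex.exp_mul_I, Complex.cos_neg, Complex.sin_neg]
    ring
  rw [h2, h1, ← Complex.ofReal_cos]
  push_cast
  ring

lemma aux_mem (n j : ℕ) (hn : 2 ≤ n) (hj : 1 ≤ j) (hj2 : j ≤ n-1) :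
    0 < th n j ∧ th n j < Real.pi := by
  have hjR : (1:ℝ) ≤ j := by exact_mod_cast hj
  have hjn : (j:ℝ) + 1 ≤ n := by exact_mod_cast (show j + 1 ≤ n by omega)
  have hNR : (0:ℝ) < 2*n-1 := by nlinarith
  have hpi := Real.pi_pos
  constructor
  · apply div_pos (by nlinarith) hNR
  · rw [th, div_lt_iff₀ hNR]
    nlinarith

lemma aux_th_inj (n j₁ j₂ : ℕ) (hn : 2 ≤ n) (h : th n j₁ = th n j₂) : j₁ = j₂ := by
  rw [th, th] at h
  have hNR := ne2nR n hn
  have hpi := Real.pi_ne_zero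
  field_simp at h
  have h' : (j₁:ℝ) = j₂ := by linarith
  exact_mod_cast h'

lemma aux_root (n j : ℕ) (hn : 2 ≤ n) (hj : 1 ≤ j) (hj2 : j ≤ n-1) (ζ : ℂ)
    (hζ : ζ = Complex.exp (Real.pi * Complex.I / (2 * ((2 * n - 1 : ℕ) : ℂ)))) :
    aeval (ζ^(2*(2*j-1)) + (ζ^(2*(2*j-1)))⁻¹ + 2) (w n) = 0 := by
  obtain ⟨hθ0, hθπ⟩ := aux_mem n j hn hj hj2
  set t : ℂ := Complex.exp ((th n j : ℝ) * Complex.I) with hT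
  have hzt : ζ^(2*(2*j-1)) = t := aux_zeta n j hn hj ζ hζ
  have ht0 : t ≠ 0 := Complex.exp_ne_zero _
  rw [hzt]
  have htz : t * (t + t⁻¹ + 2) = t^2 + 2*t + 1 := by
    field_simp; ring
  have hkey := w_key t (t + t⁻¹ + 2) htz n
  have hpow : t^(2*n-1) = -1 := by
    have h1 : t^(2*n-1) = Complex.exp (((2*n-1:ℕ):ℂ) * ((th n j : ℝ) * Complex.I)) := by
      rw [← Complex.exp_nat_mul]
    have h2 : t^(2*j-1) = 0 → True := fun _ => trivial
    rw [h1]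
    have h3 : (((2*n-1:ℕ):ℂ) * ((th n j : ℝ) * Complex.I)) =
        ((2*j-1:ℕ):ℂ) * ((Real.pi:ℂ) * Complex.I) := by
      rw [cast2nC n hn, th]
      push_cast [Nat.cast_sub (show 1 ≤ 2*j by omega), Nat.cast_sub (show 1 ≤ 2*n by omega)]
      have h1 := ne2nC n hn
      field_simp
    rw [h3, Complex.exp_nat_mul, Complex.exp_pi_mul_I]
    exact Odd.neg_one_pow ⟨j-1, by omega⟩
  have h2n : 2*n = (2*n-1) + 1 := by omega
  rw [h2n, pow_succ, hpow] at hkey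
  have hkey' : (t+1) * t^n * (aeval (t + t⁻¹ + 2) (w n)) = 0 := by rw [hkey]; ring
  have ht1 : t + 1 ≠ 0 := by
    intro h
    have him : t.im = Real.sin (th n j) := by
      rw [hT]; exact Complex.exp_ofReal_mul_I_im _
    have hsin : 0 < Real.sin (th n j) := Real.sin_pos_of_pos_of_lt_pi hθ0 hθπ
    have ht : t = -1 := by linear_combination h
    rw [ht] at him
    simp at him
    linarith
  rcases mul_eq_zero.mp hkey' with h | h
  · rcases mul_eq_zero.mp h with h | h
    · exact absurd h ht1
    · exact absurd h (pow_ne_zero _ ht0)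
  · exact h

lemma w_deg : ∀ n : ℕ, (w (n+1)).Monic ∧ (w (n+1)).natDegree = n := by
  intro n
  induction n using Nat.twoStepInduction with
  | zero => exact ⟨monic_one, natDegree_one⟩
  | one =>
    have h2 : w 2 = X - C 3 := by
      show (X - C 2) * 1 - 1 = X - C 3
      rw [mul_one, sub_sub, ← C_1, ← C_add]
      norm_num
    rw [h2]
    exact ⟨monic_X_sub_C 3, natDegree_X_sub_C 3⟩
  | more n ih1 ih2 =>
    obtain ⟨hm, hd⟩ := ih2
    obtain ⟨hm1, hd1⟩ := ih1
    have hw : w (n+3) = (X - C 2) * w (n+2) - w (n+1) := rfl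
    have hpm : ((X - C 2) * w (n+2)).Monic := (monic_X_sub_C 2).mul hm
    have hpd : ((X - C 2) * w (n+2)).natDegree = n + 2 := by
      rw [(monic_X_sub_C 2).natDegree_mul hm, natDegree_X_sub_C, hd]; omega
    have hlt : (w (n+1)).natDegree < ((X - C 2) * w (n+2)).natDegree := by
      rw [hpd, hd1]; omega
    constructor
    · rw [hw]; exact hpm.sub_of_left (degree_lt_degree hlt)
    · rw [hw, natDegree_sub_eq_left_of_natDegree_lt hlt, hpd]


/-- For `n ≥ 2` and `ζ = e^{iπ/(2(2n−1))}`, the set of complex roots of `wₙ(x)` is exactly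
`{ζ^(2(2j−1)) + ζ^(−2(2j−1)) + 2 : j = 1, …, n−1}`, and these `n−1` numbers are pairwise
distinct. -/
theorem stmt_13 (n : ℕ) (hn : 2 ≤ n) (ζ : ℂ)
    (hζ : ζ = Complex.exp (Real.pi * Complex.I / (2 * ((2 * n - 1 : ℕ) : ℂ)))) :
    (∀ z : ℂ, (Polynomial.aeval z) (w n) = 0 ↔
      ∃ j : ℕ, 1 ≤ j ∧ j ≤ n - 1 ∧
        z = ζ ^ (2 * (2 * j - 1)) + (ζ ^ (2 * (2 * j - 1)))⁻¹ + 2) ∧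
    (∀ j₁ j₂ : ℕ, 1 ≤ j₁ → j₁ ≤ n - 1 → 1 ≤ j₂ → j₂ ≤ n - 1 →
      ζ ^ (2 * (2 * j₁ - 1)) + (ζ ^ (2 * (2 * j₁ - 1)))⁻¹ + 2 =
        ζ ^ (2 * (2 * j₂ - 1)) + (ζ ^ (2 * (2 * j₂ - 1)))⁻¹ + 2 → j₁ = j₂) := by
  have hnn : n - 1 + 1 = n := by omega
  have hm : (w n).Monic := by have := (w_deg (n-1)).1; rwa [hnn] at this
  have hdeg : (w n).natDegree = n - 1 := by have := (w_deg (n-1)).2; rwa [hnn] at this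
  set p : Polynomial ℂ := (w n).map (algebraMap ℤ ℂ) with hp
  have hpm : p.Monic := hm.map _
  have hpne : p ≠ 0 := hpm.ne_zero
  have hpdeg : p.natDegree = n - 1 := by rw [hp, hm.natDegree_map]; exact hdeg
  have heval : ∀ z : ℂ, (aeval z) (w n) = p.eval z := by
    intro z; rw [hp, eval_map, aeval_def]
  have hinj : ∀ j₁ j₂ : ℕ, 1 ≤ j₁ → j₁ ≤ n - 1 → 1 ≤ j₂ → j₂ ≤ n - 1 →
      ζ ^ (2 * (2 * j₁ - 1)) + (ζ ^ (2 * (2 * j₁ - 1)))⁻¹ + 2 =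
        ζ ^ (2 * (2 * j₂ - 1)) + (ζ ^ (2 * (2 * j₂ - 1)))⁻¹ + 2 → j₁ = j₂ := by
    intro j₁ j₂ h1 h2 h3 h4 heq
    rw [aux_sum n j₁ hn h1 ζ hζ, aux_sum n j₂ hn h3 ζ hζ] at heq
    have heqr : 2 * Real.cos (th n j₁) + 2 = 2 * Real.cos (th n j₂) + 2 := by
      exact_mod_cast heq
    have hcos : Real.cos (th n j₁) = Real.cos (th n j₂) := by linarith
    obtain ⟨ha1, hb1⟩ := aux_mem n j₁ hn h1 h2
    obtain ⟨ha2, hb2⟩ := aux_mem n j₂ hn h3 h4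
    exact aux_th_inj n j₁ j₂ hn
      (Real.injOn_cos ⟨le_of_lt ha1, le_of_lt hb1⟩ ⟨le_of_lt ha2, le_of_lt hb2⟩ hcos)
  refine ⟨?_, hinj⟩
  set S : Finset ℂ := (Finset.Icc 1 (n-1)).image
      (fun j => ζ ^ (2 * (2 * j - 1)) + (ζ ^ (2 * (2 * j - 1)))⁻¹ + 2) with hS
  have hScard : S.card = n - 1 := by
    rw [hS, Finset.card_image_of_injOn, Nat.card_Icc]
    · omega
    · intro j₁ hj₁ j₂ hj₂ heq
      simp only [Finset.mem_coe, Finset.mem_Icc] at hj₁ hj₂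
      exact hinj j₁ j₂ hj₁.1 hj₁.2 hj₂.1 hj₂.2 heq
  have hsub : S ⊆ p.roots.toFinset := by
    intro z hz
    rw [hS, Finset.mem_image] at hz
    obtain ⟨j, hj, rfl⟩ := hz
    rw [Finset.mem_Icc] at hj
    rw [Multiset.mem_toFinset, mem_roots hpne]
    show p.eval _ = 0
    rw [← heval]
    exact aux_root n j hn hj.1 hj.2 ζ hζ
  have hcard2 : p.roots.toFinset.card ≤ S.card := by
    rw [hScard]
    calc p.roots.toFinset.card ≤ Multiset.card p.roots := Multiset.toFinset_card_le _
      _ ≤ p.natDegree := p.card_roots'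
      _ = n - 1 := hpdeg
  have hSeq : S = p.roots.toFinset := Finset.eq_of_subset_of_card_le hsub hcard2
  intro z
  constructor
  · intro hz
    have hzmem : z ∈ p.roots.toFinset := by
      rw [Multiset.mem_toFinset, mem_roots hpne]
      show p.eval _ = 0
      rw [← heval]; exact hz
    rw [← hSeq, hS, Finset.mem_image] at hzmem
    obtain ⟨j, hj, hje⟩ := hzmem
    rw [Finset.mem_Icc] at hj
    exact ⟨j, hj.1, hj.2, hje.symm⟩
  · rintro ⟨j, hj1, hj2, rfl⟩
    exact aux_root n j hn hj1 hj2 ζ hζ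
end

section
/- Let n ≥ 2 be an integer such that 2n−1 is prime. Then both w_n(x) and w_n(x²) are irreducible over ℚ. -/
open Polynomial

lemma w_zero : w 0 = 1 := rfl
lemma w_one : w 1 = 1 := rfl
lemma w_add_two (n : ℕ) : w (n + 2) = (X - C 2) * w (n + 1) - w n := rfl

lemma w_two : w 2 = X - C 3 := by
  rw [w_add_two, w_one, w_zero, mul_one, sub_sub, ← C_1, ← C_add]
  norm_num

lemma w_aux : ∀ n : ℕ, ((w (n+1)).Monic ∧ (w (n+1)).natDegree = n) ∧
    ((w (n+2)).Monic ∧ (w (n+2)).natDegree = n+1)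
  | 0 => by
    refine ⟨⟨monic_one, natDegree_one⟩, ?_, ?_⟩ <;> rw [w_two]
    · exact monic_X_sub_C 3
    · exact natDegree_X_sub_C 3
  | n + 1 => by
    obtain ⟨h1, h2⟩ := w_aux n
    refine ⟨h2, ?_, ?_⟩
    · rw [w_add_two, sub_eq_add_neg]
      have hM : ((X - C 2) * w (n+2)).Monic := (monic_X_sub_C 2).mul h2.1
      refine hM.add_of_left ?_
      rw [degree_neg]
      have hd1 : ((X - C 2) * w (n+2)).natDegree = n + 2 := by
        rw [(monic_X_sub_C (2:ℤ)).natDegree_mul h2.1, natDegree_X_sub_C, h2.2]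
        omega
      exact degree_lt_degree (by rw [h1.2, hd1]; omega)
    · rw [w_add_two]
      have hd1 : ((X - C 2) * w (n+2)).natDegree = n + 2 := by
        rw [(monic_X_sub_C (2:ℤ)).natDegree_mul h2.1, natDegree_X_sub_C, h2.2]
        omega
      rw [natDegree_sub_eq_left_of_natDegree_lt (by rw [hd1, h1.2]; omega), hd1]

lemma w_monic (n : ℕ) : (w (n+1)).Monic := (w_aux n).1.1
lemma w_natDegree (n : ℕ) : (w (n+1)).natDegree = n := (w_aux n).1.2

lemma w_key_s15 {F : Type*} [Field F] (t : F) (ht : t ≠ 0) :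
    ∀ n : ℕ, (t + 1) * t ^ n * (eval₂ (Int.castRingHom F) (t + t⁻¹ + 2) (w (n+1))) = t ^ (2*n+1) + 1 ∧
      (t + 1) * t ^ (n+1) * (eval₂ (Int.castRingHom F) (t + t⁻¹ + 2) (w (n+2))) = t ^ (2*(n+1)+1) + 1
  | 0 => by
    constructor
    · rw [w_one]
      simp
    · rw [w_two]
      simp only [eval₂_sub, eval₂_X, eval₂_C]
      simp only [map_ofNat]
      push_cast
      field_simp
      ring
  | n + 1 => by
    obtain ⟨ih1, ih2⟩ := w_key_s15 t ht n
    refine ⟨ih2, ?_⟩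
    rw [w_add_two, eval₂_sub, eval₂_mul, eval₂_sub, eval₂_X, eval₂_C]
    simp only [map_ofNat]
    set A2 := eval₂ (Int.castRingHom F) (t + t⁻¹ + 2) (w (n+2))
    set A1 := eval₂ (Int.castRingHom F) (t + t⁻¹ + 2) (w (n+1))
    have e : (t + 1) * t ^ (n+1+1) * ((t + t⁻¹ + 2 - 2) * A2 - A1)
        = (t + t⁻¹) * t * ((t + 1) * t ^ (n+1) * A2) - t^2 * ((t + 1) * t ^ n * A1) := by
      ring
    rw [e, ih1, ih2]
    field_simp
    ring

noncomputable def T (c : ℚ) (f : ℚ[X]) : ℚ[X] :=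
  ∑ i ∈ Finset.range (f.natDegree + 1),
    C (f.coeff i) * X ^ (f.natDegree - i) * (X^2 + C c * X + 1) ^ i

lemma T_map (c : ℚ) (f : ℚ[X]) :
    algebraMap ℚ[X] (RatFunc ℚ) (T c f)
      = RatFunc.X ^ f.natDegree
        * aeval (RatFunc.X + RatFunc.X⁻¹ + algebraMap ℚ (RatFunc ℚ) c) f := by
  have hX : (RatFunc.X : RatFunc ℚ) ≠ 0 := RatFunc.X_ne_zero
  rw [aeval_eq_sum_range, Finset.mul_sum, T, map_sum]
  refine Finset.sum_congr rfl fun i hi => ?_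
  rw [Finset.mem_range, Nat.lt_succ_iff] at hi
  have hs : RatFunc.X + RatFunc.X⁻¹ + algebraMap ℚ (RatFunc ℚ) c
      = algebraMap ℚ[X] (RatFunc ℚ) (X^2 + C c * X + 1) * RatFunc.X⁻¹ := by
    rw [map_add, map_add, map_mul, map_pow, map_one, RatFunc.algebraMap_X, RatFunc.algebraMap_C,
      eq_ratCast (algebraMap ℚ (RatFunc ℚ)) c, ← eq_ratCast RatFunc.C c]
    field_simp
    ring
  have hpow : (RatFunc.X : RatFunc ℚ) ^ (f.natDegree - i) = RatFunc.X ^ f.natDegree * (RatFunc.X⁻¹) ^ i := by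
    rw [inv_pow, eq_comm, mul_inv_eq_iff_eq_mul₀ (pow_ne_zero _ hX), ← pow_add,
      Nat.sub_add_cancel hi]
  rw [hs, Algebra.smul_def, IsScalarTower.algebraMap_apply ℚ ℚ[X] (RatFunc ℚ),
    Polynomial.algebraMap_eq, mul_pow]
  simp only [map_mul, map_pow, RatFunc.algebraMap_X, hpow]
  ring

lemma T_mul (c : ℚ) {f g : ℚ[X]} (hf : f.Monic) (hg : g.Monic) :
    T c (f * g) = T c f * T c g := by
  apply IsFractionRing.injective ℚ[X] (RatFunc ℚ)
  rw [map_mul, T_map, T_map, T_map, map_mul, hf.natDegree_mul hg, pow_add]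
  ring

lemma T_coeff_top (c : ℚ) {f : ℚ[X]} (hf : f.Monic) :
    (T c f).coeff (2 * f.natDegree) = 1 := by
  have hN : (X^2 + C c * X + 1 : ℚ[X]).Monic := by
    rw [add_assoc]
    apply monic_X_pow_add
    apply lt_of_le_of_lt (degree_add_le _ _)
    apply max_lt
    · exact lt_of_le_of_lt (degree_C_mul_X_le c) (by norm_num)
    · exact lt_of_le_of_lt degree_one_le (by norm_num)
  rw [T, finset_sum_coeff]
  rw [Finset.sum_eq_single f.natDegree]
  · rw [hf.coeff_natDegree, Nat.sub_self, map_one, one_mul, pow_zero, one_mul]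
    have h1 : ((X^2 + C c * X + 1 : ℚ[X]) ^ f.natDegree).natDegree = 2 * f.natDegree := by
      rw [hN.natDegree_pow]
      have h2 : (X^2 + C c * X + 1 : ℚ[X]).natDegree = 2 := by compute_degree!
      rw [h2]; ring
    rw [← h1]
    exact (hN.pow _).coeff_natDegree
  · intro i hi hne
    rw [Finset.mem_range, Nat.lt_succ_iff] at hi
    apply coeff_eq_zero_of_natDegree_lt
    calc (C (f.coeff i) * X ^ (f.natDegree - i) * (X^2 + C c * X + 1) ^ i).natDegree
        ≤ (C (f.coeff i) * X ^ (f.natDegree - i)).natDegree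
            + ((X^2 + C c * X + 1 : ℚ[X]) ^ i).natDegree := natDegree_mul_le
      _ ≤ (f.natDegree - i) + 2 * i := by
          gcongr
          · exact (natDegree_C_mul_le _ _).trans (by rw [natDegree_X_pow])
          · calc ((X^2 + C c * X + 1 : ℚ[X]) ^ i).natDegree
                = i * (X^2 + C c * X + 1 : ℚ[X]).natDegree := hN.natDegree_pow i
              _ ≤ 2 * i := by
                  have h2 : (X^2 + C c * X + 1 : ℚ[X]).natDegree = 2 := by compute_degree!
                  rw [h2, mul_comm]
      _ < 2 * f.natDegree := by omega
  · intro h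
    exact absurd (Finset.self_mem_range_succ f.natDegree) h

lemma T_isUnit {c : ℚ} {f : ℚ[X]} (hf : f.Monic) (hT : IsUnit (T c f)) :
    f.natDegree = 0 := by
  by_contra h
  have h0 : (T c f).natDegree = 0 := natDegree_eq_zero_of_isUnit hT
  have := T_coeff_top c hf
  rw [coeff_eq_zero_of_natDegree_lt (by omega)] at this
  exact zero_ne_one this

lemma irreducible_of_T {c : ℚ} {f : ℚ[X]} (hf : f.Monic) (hd : 1 ≤ f.natDegree)
    (hT : Irreducible (T c f)) : Irreducible f := by
  constructor
  · intro hu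
    rw [natDegree_eq_zero_of_isUnit hu] at hd
    omega
  · intro a b hab
    have hf0 : f ≠ 0 := hf.ne_zero
    have ha0 : a ≠ 0 := fun h => hf0 (by rw [hab, h, zero_mul])
    have hb0 : b ≠ 0 := fun h => hf0 (by rw [hab, h, mul_zero])
    have ha'm : (a * C a.leadingCoeff⁻¹).Monic := monic_mul_leadingCoeff_inv ha0
    have hb'm : (b * C b.leadingCoeff⁻¹).Monic := monic_mul_leadingCoeff_inv hb0
    have hlc : a.leadingCoeff * b.leadingCoeff = 1 := by
      rw [← leadingCoeff_mul, ← hab]; exact hf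
    have hf' : f = (a * C a.leadingCoeff⁻¹) * (b * C b.leadingCoeff⁻¹) := by
      rw [hab]
      have hla : a.leadingCoeff ≠ 0 := leadingCoeff_ne_zero.2 ha0
      have hlb : b.leadingCoeff ≠ 0 := leadingCoeff_ne_zero.2 hb0
      rw [mul_mul_mul_comm, ← C_mul, ← mul_inv, hlc, inv_one, C_1, mul_one]
    have hTf : T c f = T c (a * C a.leadingCoeff⁻¹) * T c (b * C b.leadingCoeff⁻¹) := by
      rw [hf', T_mul c ha'm hb'm]
    rcases hT.isUnit_or_isUnit hTf with hu | hu
    · left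
      have := T_isUnit ha'm hu
      rw [ha'm.natDegree_eq_zero] at this
      exact IsUnit.of_mul_eq_one _ this
    · right
      have := T_isUnit hb'm hu
      rw [hb'm.natDegree_eq_zero] at this
      exact IsUnit.of_mul_eq_one _ this

lemma cyclo_two_mul {p : ℕ} (hp : p.Prime) (hodd : Odd p) :
    (X + 1) * cyclotomic (2*p) ℚ = X ^ p + 1 := by
  haveI : Fact p.Prime := ⟨hp⟩
  have A : cyclotomic p ℚ * (X - 1) = X ^ p - 1 := cyclotomic_prime_mul_X_sub_one ℚ p
  have hnd : ¬ (2 ∣ p) := by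
    rw [Nat.odd_iff] at hodd
    omega
  have B : expand ℚ 2 (cyclotomic p ℚ) = cyclotomic (p*2) ℚ * cyclotomic p ℚ :=
    cyclotomic_expand_eq_cyclotomic_mul Nat.prime_two hnd ℚ
  rw [Nat.mul_comm p 2] at B
  have C1 : (cyclotomic (2*p) ℚ * cyclotomic p ℚ) * ((X:ℚ[X])^2 - 1) = X^(2*p) - 1 := by
    have h := congrArg (expand ℚ 2) A
    rw [map_mul, map_sub, map_sub, map_pow, map_one, expand_X, B, ← pow_mul] at h
    exact h
  have C2 : (X:ℚ[X])^(2*p) - 1 = (X^p - 1) * (X^p + 1) := by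
    have h : (X:ℚ[X])^(2*p) = X^p * X^p := by rw [two_mul, pow_add]
    rw [h]; ring
  have hne : cyclotomic p ℚ * (X - 1) ≠ 0 := by
    apply mul_ne_zero (cyclotomic_ne_zero p ℚ)
    intro h
    simpa using congrArg (eval 0) h
  apply mul_left_cancel₀ hne
  calc (cyclotomic p ℚ * (X - 1)) * ((X + 1) * cyclotomic (2*p) ℚ)
      = (cyclotomic (2*p) ℚ * cyclotomic p ℚ) * ((X:ℚ[X])^2 - 1) := by ring
    _ = X^(2*p) - 1 := C1
    _ = (X^p - 1) * (X^p + 1) := C2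
    _ = (cyclotomic p ℚ * (X - 1)) * (X^p + 1) := by rw [A]

lemma cyclo_four_mul {p : ℕ} (hp : p.Prime) (hodd : Odd p) :
    ((X:ℚ[X])^2 + 1) * cyclotomic (4*p) ℚ = X ^ (2*p) + 1 := by
  have h2 := congrArg (expand ℚ 2) (cyclo_two_mul hp hodd)
  simp only [map_mul, map_add, map_pow, map_one, expand_X] at h2
  rw [cyclotomic_expand_eq_cyclotomic Nat.prime_two ⟨p, rfl⟩ ℚ,
    show 2*p*2 = 4*p by ring, ← pow_mul] at h2
  exact h2


/-- If `n ≥ 2` and `2n−1` is prime, then both `wₙ(x)` and `wₙ(x²)` are irreducible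
over `ℚ`. -/
theorem stmt_15 (n : ℕ) (hn : 2 ≤ n) (hp : Nat.Prime (2 * n - 1)) :
    Irreducible ((w n).map (Int.castRingHom ℚ)) ∧
    Irreducible (((w n).comp (X ^ 2)).map (Int.castRingHom ℚ)) := by
  obtain ⟨d, rfl⟩ : ∃ d, n = d + 1 := ⟨n - 1, by omega⟩
  have hd : 1 ≤ d := by omega
  have hpp : Nat.Prime (2*d+1) := by
    have h : 2 * (d + 1) - 1 = 2*d+1 := by omega
    rwa [h] at hp
  have hoddp : Odd (2*d+1) := ⟨d, by omega⟩
  have hX1 : (X + 1 : ℚ[X]) ≠ 0 := fun h => by simpa using congrArg (eval 0) h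
  have hX2 : ((X:ℚ[X])^2 + 1) ≠ 0 := fun h => by simpa using congrArg (eval 0) h
  have hfm : ((w (d+1)).map (Int.castRingHom ℚ)).Monic := (w_monic d).map _
  have hfd : ((w (d+1)).map (Int.castRingHom ℚ)).natDegree = d := by
    rw [(w_monic d).natDegree_map, w_natDegree]
  have haev : ∀ x : RatFunc ℚ,
      aeval x ((w (d+1)).map (Int.castRingHom ℚ))
        = eval₂ (Int.castRingHom (RatFunc ℚ)) x (w (d+1)) := by
    intro x
    rw [aeval_def, eval₂_map]
    congr 1
    exact Subsingleton.elim _ _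
  -- first part
  have heq1 : (X + 1) * T 2 ((w (d+1)).map (Int.castRingHom ℚ)) = X ^ (2*d+1) + 1 := by
    apply IsFractionRing.injective ℚ[X] (RatFunc ℚ)
    rw [map_mul, T_map, hfd, map_add, map_one, RatFunc.algebraMap_X, map_add, map_pow, map_one,
      RatFunc.algebraMap_X, map_ofNat, haev]
    have hk := (w_key_s15 (RatFunc.X : RatFunc ℚ) RatFunc.X_ne_zero d).1
    calc ((RatFunc.X : RatFunc ℚ) + 1)
          * (RatFunc.X ^ d * eval₂ (Int.castRingHom (RatFunc ℚ)) (RatFunc.X + RatFunc.X⁻¹ + 2) (w (d+1)))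
        = (RatFunc.X + 1) * RatFunc.X ^ d
          * eval₂ (Int.castRingHom (RatFunc ℚ)) ((RatFunc.X : RatFunc ℚ) + RatFunc.X⁻¹ + 2) (w (d+1)) := by ring
      _ = RatFunc.X ^ (2*d+1) + 1 := hk
  have hT2 : T 2 ((w (d+1)).map (Int.castRingHom ℚ)) = cyclotomic (2*(2*d+1)) ℚ :=
    mul_left_cancel₀ hX1 (heq1.trans (cyclo_two_mul hpp hoddp).symm)
  have hirr1 : Irreducible ((w (d+1)).map (Int.castRingHom ℚ)) := by
    refine irreducible_of_T (c := 2) hfm (by omega) ?_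
    rw [hT2]
    exact cyclotomic.irreducible_rat (by positivity)
  refine ⟨hirr1, ?_⟩
  -- second part
  have hgf : ((w (d+1)).comp (X ^ 2)).map (Int.castRingHom ℚ)
      = ((w (d+1)).map (Int.castRingHom ℚ)).comp (X ^ 2) := by
    rw [Polynomial.map_comp]
    simp
  have hgm : (((w (d+1)).comp (X ^ 2)).map (Int.castRingHom ℚ)).Monic := by
    rw [hgf]
    exact hfm.comp (monic_X_pow 2) (by rw [natDegree_X_pow]; omega)
  have hgd : (((w (d+1)).comp (X ^ 2)).map (Int.castRingHom ℚ)).natDegree = 2*d := by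
    rw [hgf, natDegree_comp, hfd, natDegree_X_pow]; ring
  have hsq : ((RatFunc.X : RatFunc ℚ) + RatFunc.X⁻¹)^2
      = RatFunc.X^2 + (RatFunc.X^2)⁻¹ + 2 := by
    have hX : (RatFunc.X : RatFunc ℚ) ≠ 0 := RatFunc.X_ne_zero
    field_simp
    ring
  have heq2 : ((X:ℚ[X])^2 + 1) * T 0 (((w (d+1)).comp (X ^ 2)).map (Int.castRingHom ℚ))
      = X ^ (2*(2*d+1)) + 1 := by
    apply IsFractionRing.injective ℚ[X] (RatFunc ℚ)
    rw [map_mul, T_map, hgd, map_add, map_one, map_pow, RatFunc.algebraMap_X, map_add,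
      map_pow, map_one, RatFunc.algebraMap_X, map_zero, add_zero]
    have haev2 : aeval ((RatFunc.X : RatFunc ℚ) + RatFunc.X⁻¹)
        (((w (d+1)).comp (X ^ 2)).map (Int.castRingHom ℚ))
        = eval₂ (Int.castRingHom (RatFunc ℚ))
            ((RatFunc.X : RatFunc ℚ)^2 + (RatFunc.X^2)⁻¹ + 2) (w (d+1)) := by
      rw [hgf, aeval_comp, haev]
      congr 1
      rw [map_pow, aeval_X, hsq]
    rw [haev2]
    have hk := (w_key_s15 ((RatFunc.X : RatFunc ℚ)^2) (pow_ne_zero 2 RatFunc.X_ne_zero) d).1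
    calc ((RatFunc.X : RatFunc ℚ)^2 + 1)
          * (RatFunc.X ^ (2*d) * eval₂ (Int.castRingHom (RatFunc ℚ)) (RatFunc.X^2 + (RatFunc.X^2)⁻¹ + 2) (w (d+1)))
        = ((RatFunc.X^2 : RatFunc ℚ) + 1) * (RatFunc.X^2) ^ d
          * eval₂ (Int.castRingHom (RatFunc ℚ)) ((RatFunc.X : RatFunc ℚ)^2 + (RatFunc.X^2)⁻¹ + 2) (w (d+1)) := by
          rw [← pow_mul]
          ring
      _ = (RatFunc.X^2) ^ (2*d+1) + 1 := hk
      _ = RatFunc.X ^ (2*(2*d+1)) + 1 := by rw [← pow_mul, Nat.mul_comm 2 (2*d+1)]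
  have hT0 : T 0 (((w (d+1)).comp (X ^ 2)).map (Int.castRingHom ℚ))
      = cyclotomic (4*(2*d+1)) ℚ :=
    mul_left_cancel₀ hX2 (heq2.trans (cyclo_four_mul hpp hoddp).symm)
  refine irreducible_of_T (c := 0) hgm (by omega) ?_
  rw [hT0]
  exact cyclotomic.irreducible_rat (by positivity)
end

section
/- Let n ≥ 2, let ρ ∈ ℂ be a primitive 2(2n−1)-th root of unity, and let Ω_{2n−1}(x) be the minimal polynomial over ℚ of ρ + ρ^{−1} + 2. Then Ω_{2n−1}(x) divides w_n(x) in ℚ[x], but Ω_{2n−1}(x) does not divide w_m(x) for any integer m with 2 ≤ m < n; that is, Ω_{2n−1}(x) is a primitive divisor of w_n(x). -/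
open Polynomial

/-- Closed form at `α = ρ + ρ⁻¹ + 2`: `(ρ+1)·ρᵏ·wₖ(α) = ρ^(2k) + ρ`. -/
lemma w_key_s19 (ρ : ℂ) (hρ : ρ ≠ 0) :
    ∀ k, (ρ + 1) * ρ ^ k * (aeval (ρ + ρ⁻¹ + 2) (w k) : ℂ) = ρ ^ (2 * k) + ρ
  | 0 => by simp [w]; ring
  | 1 => by simp [w]; ring
  | (k+2) => by
    have h1 := w_key_s19 ρ hρ k
    have h2 := w_key_s19 ρ hρ (k+1)
    have hinv : ρ * ρ⁻¹ = 1 := mul_inv_cancel₀ hρ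
    simp only [w, map_sub, map_mul, aeval_X, aeval_C, map_ofNat, eq_intCast,
      Int.cast_ofNat] at *
    linear_combination (ρ^2 + 1) * h2 - ρ^2 * h1 +
      (ρ+1) * ρ^(k+1) * (aeval (ρ + ρ⁻¹ + 2) (w (k+1)) : ℂ) * hinv

/-- For `n ≥ 2`, `ρ` a primitive `2(2n−1)`-th root of unity in `ℂ`, and `Ω_{2n−1}` the
minimal polynomial over `ℚ` of `ρ + ρ⁻¹ + 2`: `Ω_{2n−1}` divides `wₙ(x)` in `ℚ[x]`, but
`Ω_{2n−1}` does not divide `w_m(x)` for any `2 ≤ m < n`; i.e. `Ω_{2n−1}` is a primitive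
divisor of `wₙ(x)`. -/
theorem stmt_19 (n : ℕ) (hn : 2 ≤ n) (ρ : ℂ)
    (hρ : IsPrimitiveRoot ρ (2 * (2 * n - 1))) :
    minpoly ℚ (ρ + ρ⁻¹ + 2) ∣ (w n).map (Int.castRingHom ℚ) ∧
    ∀ m : ℕ, 2 ≤ m → m < n →
      ¬ minpoly ℚ (ρ + ρ⁻¹ + 2) ∣ (w m).map (Int.castRingHom ℚ) := by
  have hρ0 : ρ ≠ 0 := hρ.ne_zero (by omega)
  set α : ℂ := ρ + ρ⁻¹ + 2 with hα
  -- key equivalence: aeval α (w k) = 0 ↔ ρ ^ (2k) = -ρ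
  have hkey : ∀ k : ℕ, (aeval α (w k) : ℂ) = 0 ↔ ρ ^ (2 * k) = -ρ := by
    intro k
    have h := w_key_s19 ρ hρ0 k
    have hρ1 : ρ + 1 ≠ 0 := by
      intro h'
      have hρneg : ρ = -1 := by linear_combination h'
      have h2 : ρ ^ 2 = 1 := by rw [hρneg]; ring
      have := Nat.le_of_dvd (by norm_num) (hρ.dvd_of_pow_eq_one 2 h2)
      omega
    constructor
    · intro h0
      rw [h0, mul_zero] at h
      linear_combination -h
    · intro h0
      rw [h0] at h
      have h' : (ρ + 1) * ρ ^ k * (aeval α (w k) : ℂ) = 0 := by linear_combination h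
      rcases mul_eq_zero.1 h' with h' | h'
      · exact absurd h' (mul_ne_zero hρ1 (pow_ne_zero _ hρ0))
      · exact h'
  have hdvdpow : ∀ k : ℕ, 2 ≤ k → (ρ ^ (2 * k) = -ρ ↔ 2 * (2 * n - 1) ∣ 2 * (2 * k - 1)) := by
    intro k hk
    have h2k : 2 * k = (2 * k - 1) + 1 := by omega
    constructor
    · intro h
      apply hρ.dvd_of_pow_eq_one
      have hmul : ρ ^ (2 * k - 1) * ρ = -1 * ρ := by
        rw [← pow_succ, ← h2k, h]; ring
      have h3 : ρ ^ (2 * k - 1) = -1 := mul_right_cancel₀ hρ0 hmul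
      calc ρ ^ (2 * (2 * k - 1)) = (ρ ^ (2 * k - 1)) ^ 2 := by rw [← pow_mul, Nat.mul_comm]
        _ = 1 := by rw [h3]; ring
    · intro h
      have h1 : ρ ^ (2 * (2 * k - 1)) = 1 := (hρ.pow_eq_one_iff_dvd _).2 h
      have hsq : (ρ ^ (2 * k - 1)) ^ 2 = 1 := by
        rw [← pow_mul, Nat.mul_comm]; exact h1
      rcases sq_eq_one_iff.1 hsq with h3 | h3
      · exfalso
        have hd : 2 * (2 * n - 1) ∣ (2 * k - 1) := hρ.dvd_of_pow_eq_one _ h3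
        have h2d : (2 : ℕ) ∣ (2 * k - 1) := dvd_trans ⟨2 * n - 1, rfl⟩ hd
        obtain ⟨d, hdd⟩ := h2d
        omega
      · rw [h2k, pow_succ, h3]; ring
  constructor
  · apply minpoly.dvd ℚ α
    rw [← algebraMap_int_eq, aeval_map_algebraMap]
    exact (hkey n).2 ((hdvdpow n hn).2 dvd_rfl)
  · intro m hm hmn hdvd
    obtain ⟨q, hq⟩ := hdvd
    have h0 : (aeval α ((w m).map (Int.castRingHom ℚ)) : ℂ) = 0 := by
      rw [hq, map_mul, minpoly.aeval, zero_mul]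
    rw [← algebraMap_int_eq, aeval_map_algebraMap] at h0
    have hd := (hdvdpow m hm).1 ((hkey m).1 h0)
    have := Nat.le_of_dvd (by omega) hd
    omega
end
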